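/- arXiv:2405.02689 — 2 statements merged into one kernel-verified Lean document; each statement's English description precedes it below -/
import Mathlib

section
/- Let F be a field, n > 0, and S be an optimal affine subspace of n×n matrices over F with direction (translation vector space) D. Let A ∈ S (so A is invertible), and let X ∈ F^n be a nonzero vector that is adapted to the trivial spectrum linear subspace {A⁻¹N : N ∈ D}. Then the linear subspace F·(A·X) + {N·X : N ∈ D} equals all of F^n; equivalently, the span over F of {M·X : M ∈ S} is F^n. -/
open Module Submodule LinearMap

variable {F : Type} [Field F] {V : Type} [AddCommGroup V] [Module F V]

def NoFix (S : Submodule F (V →ₗ[F] V)) : Prop := ∀ f ∈ S, ∀ v : V, f v = v → v = 0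

def Adapted (S : Submodule F (V →ₗ[F] V)) (x : V) : Prop :=
  ∀ f ∈ S, f ≠ 0 → LinearMap.range f ≠ Submodule.span F {x}

example (r : V →ₗ[F] F) (x : V) (v : V) : r.smulRight x v = r v • x := rfl

lemma noCycle (S : Submodule F (V →ₗ[F] V)) (hNF : NoFix S) :
    ∀ m : ℕ, 0 < m → ∀ (x : ℕ → V) (r : ℕ → (V →ₗ[F] F)),
      (∀ i < m, (r i).smulRight (x i) ∈ S) →
      (∀ i, i + 1 < m → r i (x (i+1)) ≠ 0) →
      r (m-1) (x 0) ≠ 0 → False := by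
  intro m
  induction m using Nat.strong_induction_on with
  | _ m IH =>
  intro hm x r hmem hedge hclose
  by_cases hdiag : ∃ i < m, r i (x i) ≠ 0
  · obtain ⟨i, him, hi⟩ := hdiag
    have hxi : x i ≠ 0 := fun h => hi (by simp [h])
    have hmemS : (r i (x i))⁻¹ • ((r i).smulRight (x i)) ∈ S := S.smul_mem _ (hmem i him)
    refine hxi (hNF _ hmemS (x i) ?_)
    simp only [LinearMap.smul_apply, LinearMap.smulRight_apply]
    rw [smul_smul, inv_mul_cancel₀ hi, one_smul]
  · push_neg at hdiag
    by_cases hchord : ∃ i < m, ∃ l < m, l ≠ i + 1 ∧ ¬(i = m - 1 ∧ l = 0) ∧ r i (x l) ≠ 0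
    · obtain ⟨i, him, l, hlm, hli, hnc, hrl⟩ := hchord
      have hlnei : l ≠ i := by
        rintro rfl; exact hrl (hdiag l hlm)
      rcases lt_or_gt_of_ne hlnei with hlt | hgt
      · -- backward chord : mini-cycle x_l ... x_i
        refine IH (i - l + 1) (by omega) (by omega) (fun j => x (l + j)) (fun j => r (l + j))
          (fun j hj => hmem (l + j) (by omega)) (fun j hj => ?_) ?_
        · have : l + (j + 1) = (l + j) + 1 := by omega
          rw [this]
          exact hedge (l + j) (by omega)
        · have h1 : i - l + 1 - 1 = i - l := by omega
          have h2 : l + (i - l) = i := by omega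
          rw [h1, h2]
          exact hrl
      · -- forward chord : skip the block between i+1 and l
        have hgt' : i + 1 < l := by omega
        set d := l - i - 1 with hd
        have hd1 : 1 ≤ d := by omega
        have hdm : d + i + 2 ≤ m := by omega
        refine IH (m - d) (by omega) (by omega)
          (fun j => if j ≤ i then x j else x (j + d))
          (fun j => if j ≤ i then r j else r (j + d))
          (fun j hj => ?_) (fun j hj => ?_) ?_
        · split_ifs with h
          · exact hmem j (by omega)
          · exact hmem (j + d) (by omega)
        · split_ifs with h1 h2 h2
          · exact hedge j (by omega)
          · -- j ≤ i, ¬(j+1 ≤ i) : j = i, target is x (i+1+d) = x l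
            have hji : j = i := by omega
            have : j + 1 + d = l := by omega
            rw [this, hji]
            exact hrl
          · omega
          · have : j + 1 + d = (j + d) + 1 := by omega
            rw [this]
            exact hedge (j + d) (by omega)
        · have h0 : (0:ℕ) ≤ i := Nat.zero_le _
          have hni : ¬(m - d - 1 ≤ i) := by omega
          rw [if_pos h0, if_neg hni]
          have : m - d - 1 + d = m - 1 := by omega
          rw [this]
          exact hclose
    · -- pure cycle
      push_neg at hchord
      have hm2 : 2 ≤ m := by
        by_contra h
        have hm1 : m = 1 := by omega
        rw [hm1] at hclose
        exact hclose (hdiag 0 (by omega))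
      set nxt : ℕ → ℕ := fun i => if i = m - 1 then 0 else i + 1 with hnxt
      have hnxtlt : ∀ i < m, nxt i < m := by
        intro i hi; dsimp only [nxt]; split_ifs <;> omega
      have hu : ∀ i < m, r i (x (nxt i)) ≠ 0 := by
        intro i hi; dsimp only [nxt]; split_ifs with h
        · rw [← h] at hclose; exact hclose
        · exact hedge i (by omega)
      have hz : ∀ i < m, ∀ l < m, l ≠ nxt i → r i (x l) = 0 := by
        intro i hi l hl hne
        rcases eq_or_ne l i with rfl | hli
        · exact hdiag l hl
        rcases eq_or_ne i (m-1) with rfl | him1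
        · refine hchord (m-1) hi l hl (by omega) (by simp [nxt] at hne; omega)
        · refine hchord i hi l hl (by simp [nxt, him1] at hne; exact hne) (by omega)
      set v := ∑ l ∈ Finset.range m, x l with hv
      have hrv : ∀ i < m, r i v = r i (x (nxt i)) := by
        intro i hi
        rw [hv, map_sum]
        refine Finset.sum_eq_single_of_mem (nxt i) (Finset.mem_range.mpr (hnxtlt i hi)) ?_
        intro l hl hne
        exact hz i hi l (Finset.mem_range.mp hl) hne
      set M := ∑ i ∈ Finset.range m, (r i (x (nxt i)))⁻¹ • ((r i).smulRight (x i)) with hM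
      have hMS : M ∈ S := by
        refine Submodule.sum_mem S (fun i hi => Submodule.smul_mem S _ (hmem i (Finset.mem_range.mp hi)))
      have hMv : M v = v := by
        rw [hM, hv, LinearMap.sum_apply]
        refine Finset.sum_congr rfl (fun i hi => ?_)
        have hi' := Finset.mem_range.mp hi
        simp only [LinearMap.smul_apply, LinearMap.smulRight_apply]
        rw [hrv i hi', smul_smul, inv_mul_cancel₀ (hu i hi'), one_smul]
      have hvne : v ≠ 0 := by
        intro h
        apply hu 0 (by omega)
        rw [← hrv 0 (by omega), h, map_zero]
      exact hvne (hNF M hMS v hMv)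

lemma rank_one_decomp (x : V) (hx : x ≠ 0) (f : V →ₗ[F] V)
    (hrange : LinearMap.range f ≤ Submodule.span F {x}) :
    ∃ r : V →ₗ[F] F, f = r.smulRight x := by
  have hmem : ∀ v, f v ∈ Submodule.span F {x} := fun v => hrange ⟨v, rfl⟩
  refine ⟨(LinearEquiv.coord F V x hx).toLinearMap.comp (f.codRestrict _ hmem), ?_⟩
  ext v
  simp only [LinearMap.smulRight_apply, LinearMap.comp_apply, LinearEquiv.coe_coe]
  have := LinearEquiv.coord_apply_smul F V x hx (f.codRestrict _ hmem v)
  rw [this]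
  rfl

lemma exists_adapted [FiniteDimensional F V] (hV : 0 < Module.finrank F V)
    (S : Submodule F (V →ₗ[F] V)) (hNF : NoFix S) : ∃ x : V, x ≠ 0 ∧ Adapted S x := by
  by_contra hcon
  push_neg at hcon
  have h' : ∀ x : V, x ≠ 0 → ∃ r : V →ₗ[F] F, r ≠ 0 ∧ r.smulRight x ∈ S := by
    intro x hx
    have := hcon x hx
    unfold Adapted at this
    push_neg at this
    obtain ⟨f, hfS, hfne, hfr⟩ := this
    obtain ⟨r, rfl⟩ := rank_one_decomp x hx f hfr.le
    exact ⟨r, fun h => hfne (by rw [h]; ext v; simp), hfS⟩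
  classical
  -- choice functions
  set rfun : V → (V →ₗ[F] F) := fun x => if hx : x ≠ 0 then (h' x hx).choose else 0 with hrfun
  have hrprop : ∀ x : V, x ≠ 0 → rfun x ≠ 0 ∧ (rfun x).smulRight x ∈ S := by
    intro x hx
    simp only [hrfun, dif_pos hx]
    exact (h' x hx).choose_spec
  set step : V → V := fun x =>
    if hx : rfun x ≠ 0 then (DFunLike.ne_iff.mp hx).choose else 0 with hstep
  have hstepprop : ∀ x : V, x ≠ 0 → rfun x (step x) ≠ 0 := by
    intro x hx
    have hr := (hrprop x hx).1
    simp only [hstep, dif_pos hr]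
    have := (DFunLike.ne_iff.mp hr).choose_spec
    simpa using this
  haveI : Nontrivial V := Module.nontrivial_of_finrank_pos hV
  obtain ⟨x0, hx0⟩ := exists_ne (0 : V)
  set seq : ℕ → V := fun k => Nat.rec x0 (fun _ xk => step xk) k with hseq
  have hseqsucc : ∀ k, seq (k+1) = step (seq k) := fun k => rfl
  have hseqne : ∀ k, seq k ≠ 0 := by
    intro k; induction k with
    | zero => exact hx0
    | succ k ih =>
      rw [hseqsucc]
      intro h
      exact hstepprop (seq k) ih (by rw [← hseqsucc, h] at *; simpa [h] using hstepprop (seq k) ih)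
  have hedge : ∀ k, rfun (seq k) (seq (k+1)) ≠ 0 := by
    intro k; rw [hseqsucc]; exact hstepprop (seq k) (hseqne k)
  have hkill : ∀ k j, j ≤ k → rfun (seq k) (seq j) = 0 := by
    intro k j hjk
    by_contra hne0
    refine noCycle S hNF (k - j + 1) (by omega) (fun i => seq (j + i)) (fun i => rfun (seq (j + i)))
      (fun i _ => (hrprop _ (hseqne _)).2) (fun i hi => ?_) ?_
    · have : j + (i + 1) = (j + i) + 1 := by omega
      rw [this]
      exact hedge (j + i)
    · have h1 : k - j + 1 - 1 = k - j := by omega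
      have h2 : j + (k - j) = k := by omega
      rw [h1, h2]
      exact hne0
  -- strictly increasing chain of spans
  set W : ℕ → Submodule F V := fun k => Submodule.span F (seq '' Set.Iic k) with hW
  have hWlt : ∀ k, W k < W (k+1) := by
    intro k
    refine lt_of_le_of_ne (Submodule.span_mono (Set.image_mono (Set.Iic_subset_Iic.mpr (Nat.le_succ k)))) ?_
    intro heq
    have hmemW : seq (k+1) ∈ W (k+1) :=
      Submodule.subset_span ⟨k+1, by simp, rfl⟩
    rw [← heq] at hmemW
    have hker : W k ≤ LinearMap.ker (rfun (seq k)) := by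
      rw [hW]
      refine Submodule.span_le.mpr ?_
      rintro _ ⟨j, hj, rfl⟩
      exact hkill k j hj
    exact hedge k (hker hmemW)
  have hrank : ∀ k, k + 1 ≤ Module.finrank F (W k) := by
    intro k; induction k with
    | zero =>
      by_contra h
      have h0 : Module.finrank F (W 0) = 0 := by omega
      rw [Submodule.finrank_eq_zero] at h0
      have hmem0 : seq 0 ∈ W 0 := Submodule.subset_span ⟨0, by simp, rfl⟩
      rw [h0] at hmem0
      exact hseqne 0 (by simpa using hmem0)
    | succ k ih =>
      have := Submodule.finrank_lt_finrank_of_lt (hWlt k)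
      omega
  have h1 := hrank (Module.finrank F V)
  have h2 := Submodule.finrank_le (W (Module.finrank F V))
  omega

/-- evaluation of elements of `S` at `x` -/
def evS (S : Submodule F (V →ₗ[F] V)) (x : V) : S →ₗ[F] V where
  toFun f := f.1 x
  map_add' f g := by simp
  map_smul' c f := by simp

lemma sub1dim {x : V} (hx : x ≠ 0) {N : Submodule F V}
    (hle : N ≤ Submodule.span F {x}) (hne : N ≠ ⊥) : N = Submodule.span F {x} := by
  obtain ⟨v, hvN, hv0⟩ := Submodule.exists_mem_ne_zero_of_ne_bot hne
  obtain ⟨c, hc⟩ := Submodule.mem_span_singleton.mp (hle hvN)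
  have hcne : c ≠ 0 := by rintro rfl; simp at hc; exact hv0 hc.symm
  refine le_antisymm hle ?_
  rw [Submodule.span_singleton_le_iff_mem]
  have : x = c⁻¹ • v := by rw [← hc, smul_smul, inv_mul_cancel₀ hcne, one_smul]
  rw [this]
  exact N.smul_mem _ hvN

set_option synthInstance.maxHeartbeats 1000000 in
set_option maxHeartbeats 1000000 in
lemma kerBound [FiniteDimensional F V] (S : Submodule F (V →ₗ[F] V)) (hNF : NoFix S)
    (x : V) (hx : x ≠ 0) (had : Adapted S x) (C : ℕ)
    (hq : ∀ S' : Submodule F ((V ⧸ Submodule.span F {x}) →ₗ[F] (V ⧸ Submodule.span F {x})),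
      NoFix S' → Module.finrank F S' ≤ C) :
    Module.finrank F (LinearMap.ker (evS S x)) ≤ C := by
  classical
  set p := Submodule.span F {x} with hp
  have hker0 : ∀ f : LinearMap.ker (evS S x), f.1.1 x = 0 := by
    intro f
    have := f.2
    rwa [LinearMap.mem_ker] at this
  have hcomap : ∀ f : LinearMap.ker (evS S x), p ≤ p.comap f.1.1 := by
    intro f
    rw [hp, Submodule.span_singleton_le_iff_mem, Submodule.mem_comap, hker0 f]
    exact Submodule.zero_mem p
  set ψ : LinearMap.ker (evS S x) →ₗ[F] ((V ⧸ p) →ₗ[F] (V ⧸ p)) :=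
    { toFun := fun f => Submodule.mapQ p p f.1.1 (hcomap f)
      map_add' := by
        intro f g
        ext v
        simp [Submodule.mapQ_apply]
      map_smul' := by
        intro c f
        ext v
        simp [Submodule.mapQ_apply] } with hψ
  have hψapp : ∀ (f : LinearMap.ker (evS S x)) (v : V), ψ f (p.mkQ v) = p.mkQ (f.1.1 v) := by
    intro f v
    simp [hψ, Submodule.mapQ_apply]
  have hψinj : Function.Injective ψ := by
    rw [injective_iff_map_eq_zero]
    intro f hf
    have hrange : LinearMap.range f.1.1 ≤ p := by
      rintro _ ⟨v, rfl⟩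
      have : ψ f (p.mkQ v) = 0 := by rw [hf]; simp
      rw [hψapp] at this
      rwa [← Submodule.Quotient.mk_eq_zero p]
    have hf0 : f.1.1 = 0 := by
      by_contra hne
      exact had f.1.1 f.1.2 hne (sub1dim hx hrange (fun h => hne (LinearMap.range_eq_bot.mp h)))
    ext v
    simp [hf0]
  have hNF' : NoFix (LinearMap.range ψ) := by
    rintro g ⟨f, rfl⟩ v hv
    obtain ⟨w, rfl⟩ := p.mkQ_surjective v
    rw [hψapp] at hv
    have hsub : f.1.1 w - w ∈ p := by
      rwa [Submodule.mkQ_apply, Submodule.mkQ_apply, Submodule.Quotient.eq] at hv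
    obtain ⟨c, hc⟩ := Submodule.mem_span_singleton.mp hsub
    have hfix : f.1.1 (w + c • x) = w + c • x := by
      have hw : f.1.1 w = w + c • x := by
        have h2 := hc.symm
        rw [sub_eq_iff_eq_add] at h2
        rw [h2, add_comm]
      rw [map_add, map_smul, hker0 f, smul_zero, add_zero, hw]
    have hw0 := hNF f.1.1 f.1.2 _ hfix
    have hxq : p.mkQ x = 0 := by
      rw [Submodule.mkQ_apply, Submodule.Quotient.mk_eq_zero]
      exact Submodule.mem_span_singleton_self x
    have hw : w = -(c • x) := eq_neg_of_add_eq_zero_left hw0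
    show p.mkQ w = 0
    rw [hw, map_neg, map_smul, hxq, smul_zero, neg_zero]
  calc Module.finrank F (LinearMap.ker (evS S x))
      = Module.finrank F (LinearMap.range ψ) := (LinearMap.finrank_range_of_inj hψinj).symm
    _ ≤ C := hq _ hNF'

set_option synthInstance.maxHeartbeats 1000000 in
set_option maxHeartbeats 1000000 in
theorem TSbound (n : ℕ) :
    ∀ (W : Type) [AddCommGroup W] [Module F W] [FiniteDimensional F W],
      Module.finrank F W = n → ∀ S : Submodule F (W →ₗ[F] W), NoFix S →
      Module.finrank F S ≤ n.choose 2 := by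
  induction n using Nat.strong_induction_on with
  | _ n IH =>
  intro W _ _ _ hW S hNF
  rcases n with _ | m
  · haveI : Subsingleton W := by
      rw [← Module.finrank_zero_iff (R := F)]
      exact hW
    haveI : Subsingleton (W →ₗ[F] W) := ⟨fun f g => by ext v; simp [Subsingleton.elim (f v) (g v)]⟩
    haveI : Subsingleton S := ⟨fun f g => Subtype.ext (Subsingleton.elim f.1 g.1)⟩
    simp [Module.finrank_zero_iff.mpr ‹Subsingleton S›]
  · obtain ⟨x, hx0, had⟩ := exists_adapted (by rw [hW]; omega) S hNF
    have hrn := LinearMap.finrank_range_add_finrank_ker (evS S x)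
    have hxr : x ∉ LinearMap.range (evS S x) := by
      rintro ⟨f, hf⟩
      exact hx0 (hNF f.1 f.2 x hf)
    have hlt : LinearMap.range (evS S x) < ⊤ :=
      lt_of_le_of_ne le_top (fun h => hxr (h ▸ Submodule.mem_top))
    have h1 : Module.finrank F (LinearMap.range (evS S x)) < Module.finrank F W :=
      Submodule.finrank_lt hlt.ne
    have hqrank : Module.finrank F (W ⧸ Submodule.span F {x}) = m := by
      have h2 := Submodule.finrank_quotient_add_finrank (Submodule.span F {x})
      have h3 : Module.finrank F (Submodule.span F {x}) = 1 := finrank_span_singleton hx0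
      omega
    have hker : Module.finrank F (LinearMap.ker (evS S x)) ≤ m.choose 2 :=
      kerBound S hNF x hx0 had (m.choose 2)
        (fun S' hS' => IH m (by omega) _ hqrank S' hS')
    have hch : (m + 1).choose 2 = m.choose 1 + m.choose 2 := Nat.choose_succ_succ m 1
    have hch1 : m.choose 1 = m := Nat.choose_one_right m
    rw [hW] at h1
    omega

set_option synthInstance.maxHeartbeats 1000000 in
set_option maxHeartbeats 1000000 in
lemma core [FiniteDimensional F V] (S : Submodule F (V →ₗ[F] V)) (hNF : NoFix S)
    (x : V) (hx : x ≠ 0) (had : Adapted S x)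
    (hdim : (Module.finrank F V).choose 2 ≤ Module.finrank F S) :
    Submodule.span F ({x} ∪ {y : V | ∃ f ∈ S, f x = y}) = ⊤ := by
  haveI : Nontrivial V := ⟨x, 0, hx⟩
  have hn : 0 < Module.finrank F V := Module.finrank_pos
  obtain ⟨m, hm⟩ : ∃ m, Module.finrank F V = m + 1 := ⟨Module.finrank F V - 1, by omega⟩
  set E := LinearMap.range (evS S x) with hE
  have hsetE : {y : V | ∃ f ∈ S, f x = y} = (E : Set V) := by
    ext y
    constructor
    · rintro ⟨f, hfS, rfl⟩; exact ⟨⟨f, hfS⟩, rfl⟩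
    · rintro ⟨f, rfl⟩; exact ⟨f.1, f.2, rfl⟩
  have hqrank : Module.finrank F (V ⧸ Submodule.span F {x}) = m := by
    have h2 := Submodule.finrank_quotient_add_finrank (Submodule.span F {x})
    have h3 : Module.finrank F (Submodule.span F {x}) = 1 := finrank_span_singleton hx
    omega
  have hker : Module.finrank F (LinearMap.ker (evS S x)) ≤ m.choose 2 :=
    kerBound S hNF x hx had (m.choose 2)
      (fun S' hS' => TSbound m _ hqrank S' hS')
  have hrn := LinearMap.finrank_range_add_finrank_ker (evS S x)
  have hch : (m + 1).choose 2 = m.choose 1 + m.choose 2 := Nat.choose_succ_succ m 1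
  have hch1 : m.choose 1 = m := Nat.choose_one_right m
  have hEm : m ≤ Module.finrank F E := by
    rw [hm, hch, hch1] at hdim
    rw [← hE] at hrn
    omega
  have hxE : x ∉ E := by
    rintro ⟨f, hf⟩
    exact hx (hNF f.1 f.2 x hf)
  have hspan : Submodule.span F ({x} ∪ {y : V | ∃ f ∈ S, f x = y})
      = Submodule.span F {x} ⊔ E := by
    rw [Submodule.span_union, hsetE, Submodule.span_eq]
  rw [hspan]
  have hlt : E < Submodule.span F {x} ⊔ E := by
    refine lt_of_le_of_ne le_sup_right (fun h => hxE ?_)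
    rw [h]
    exact (le_sup_left : Submodule.span F {x} ≤ _) (Submodule.mem_span_singleton_self x)
  have h2 : Module.finrank F E < Module.finrank F ↥(Submodule.span F {x} ⊔ E) :=
    Submodule.finrank_lt_finrank_of_lt hlt
  have h3 : Module.finrank F ↥(Submodule.span F {x} ⊔ E) ≤ Module.finrank F V :=
    Submodule.finrank_le _
  apply Submodule.eq_top_of_finrank_eq
  omega

/-- An affine subspace of s×s matrices is *optimal* if it is nonempty, all its
elements are invertible, and its dimension equals s(s-1)/2. -/
def IsOptimal {F : Type} [Field F] {s : ℕ}
    (W : AffineSubspace F (Matrix (Fin s) (Fin s) F)) : Prop :=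
  (W : Set (Matrix (Fin s) (Fin s) F)).Nonempty ∧
    (∀ M ∈ W, IsUnit M) ∧
    Module.finrank F W.direction = s * (s - 1) / 2

set_option maxHeartbeats 1000000 in
/-- Let S be an optimal affine subspace of n×n matrices over a
field F with direction D, let A ∈ S, and let X ∈ F^n be a nonzero vector
adapted to the trivial spectrum subspace {A⁻¹N : N ∈ D}. Then
F·(A·X) + {N·X : N ∈ D} = F^n; equivalently, the span of {M·X : M ∈ S}
is all of F^n. -/
theorem stmt_18 (F : Type) [Field F] (n : ℕ) (hn : 0 < n)
    (S : AffineSubspace F (Matrix (Fin n) (Fin n) F)) (hS : IsOptimal S)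
    (A : Matrix (Fin n) (Fin n) F) (hA : A ∈ S)
    (X : Fin n → F) (hX : X ≠ 0)
    (hadapt : ∀ N ∈ S.direction, A⁻¹ * N ≠ 0 →
      LinearMap.range (A⁻¹ * N).mulVecLin ≠ Submodule.span F {X}) :
    Submodule.span F
        ({A.mulVec X} ∪ {Y : Fin n → F | ∃ N ∈ S.direction, N.mulVec X = Y}) = ⊤ ∧
    Submodule.span F {Y : Fin n → F | ∃ M ∈ S, M.mulVec X = Y} = ⊤ := by
  classical
  obtain ⟨hne, hinv, hdim⟩ := hS
  have hAU : IsUnit A := hinv A hA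
  have hAdet : IsUnit A.det := (Matrix.isUnit_iff_isUnit_det A).mp hAU
  have hAiA : A⁻¹ * A = 1 := Matrix.nonsing_inv_mul A hAdet
  have hAAi : A * A⁻¹ = 1 := Matrix.mul_nonsing_inv A hAdet
  set D := S.direction with hD
  set ψ : Matrix (Fin n) (Fin n) F →ₗ[F] ((Fin n → F) →ₗ[F] (Fin n → F)) :=
    Matrix.toLin'.toLinearMap.comp (LinearMap.mulLeft F A⁻¹) with hψ
  have hψapp : ∀ N : Matrix (Fin n) (Fin n) F, ψ N = Matrix.toLin' (A⁻¹ * N) := fun N => rfl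
  set T : Submodule F ((Fin n → F) →ₗ[F] (Fin n → F)) := D.map ψ with hT
  have hkey : ∀ N : Matrix (Fin n) (Fin n) F,
      A.mulVec ((A⁻¹ * N).mulVec X) = N.mulVec X := by
    intro N
    rw [Matrix.mulVec_mulVec, ← Matrix.mul_assoc, hAAi, Matrix.one_mul]
  -- trivial spectrum (no fixed vectors)
  have hNF : NoFix T := by
    intro f hf v hfv
    rw [hT, Submodule.mem_map] at hf
    obtain ⟨N, hN, rfl⟩ := hf
    rw [hψapp, Matrix.toLin'_apply] at hfv
    have hMS : A - N ∈ S := by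
      have := AffineSubspace.vadd_mem_of_mem_direction (D.neg_mem hN) hA
      simpa [sub_eq_neg_add] using this
    have hMdet : IsUnit (A - N).det := (Matrix.isUnit_iff_isUnit_det _).mp (hinv _ hMS)
    have hMv : (A - N).mulVec v = 0 := by
      rw [Matrix.sub_mulVec]
      have h2 : N.mulVec v = A.mulVec v := by
        calc N.mulVec v = (A * (A⁻¹ * N)).mulVec v := by
              rw [← Matrix.mul_assoc, hAAi, Matrix.one_mul]
          _ = A.mulVec ((A⁻¹ * N).mulVec v) := by rw [Matrix.mulVec_mulVec]
          _ = A.mulVec v := by rw [hfv]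
      rw [h2, sub_self]
    have h3 := Matrix.nonsing_inv_mul (A - N) hMdet
    have h4 : ((A - N)⁻¹ * (A - N)).mulVec v = v := by rw [h3, Matrix.one_mulVec]
    rw [← Matrix.mulVec_mulVec, hMv, Matrix.mulVec_zero] at h4
    exact h4.symm
  -- injectivity of ψ and rank of T
  have hψinj : Function.Injective ψ := by
    intro N N' h
    rw [hψapp, hψapp] at h
    have h2 : A⁻¹ * N = A⁻¹ * N' := Matrix.toLin'.injective h
    calc N = A * (A⁻¹ * N) := by rw [← Matrix.mul_assoc, hAAi, Matrix.one_mul]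
      _ = A * (A⁻¹ * N') := by rw [h2]
      _ = N' := by rw [← Matrix.mul_assoc, hAAi, Matrix.one_mul]
  have hTrank : Module.finrank F T = n.choose 2 := by
    have e := Submodule.equivMapOfInjective ψ hψinj D
    rw [hT, ← LinearEquiv.finrank_eq e, hdim, Nat.choose_two_right]
  -- adaptedness
  have hadT : Adapted T X := by
    intro f hf hfne
    rw [hT, Submodule.mem_map] at hf
    obtain ⟨N, hN, rfl⟩ := hf
    have hNne : A⁻¹ * N ≠ 0 := by
      intro h0
      apply hfne
      rw [hψapp, h0, map_zero]
    have h5 := hadapt N hN hNne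
    rw [hψapp, Matrix.toLin'_apply']
    exact h5
  -- the core result
  have hcore : Submodule.span F ({X} ∪ {y : Fin n → F | ∃ f ∈ T, f X = y}) = ⊤ := by
    refine core T hNF X hX hadT ?_
    rw [hTrank, Module.finrank_fin_fun]
  -- goal 1
  have hsurj : Function.Surjective A.mulVecLin := by
    intro v
    refine ⟨A⁻¹.mulVec v, ?_⟩
    rw [Matrix.mulVecLin_apply, Matrix.mulVec_mulVec, hAAi, Matrix.one_mulVec]
  have hset : A.mulVecLin '' ({X} ∪ {y : Fin n → F | ∃ f ∈ T, f X = y})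
      = {A.mulVec X} ∪ {Y : Fin n → F | ∃ N ∈ D, N.mulVec X = Y} := by
    ext Y
    simp only [Set.mem_image, Set.mem_union, Set.mem_singleton_iff, Set.mem_setOf_eq,
      Matrix.mulVecLin_apply]
    constructor
    · rintro ⟨y, hy | ⟨f, hfT, rfl⟩, rfl⟩
      · left; rw [hy]
      · right
        rw [hT, Submodule.mem_map] at hfT
        obtain ⟨N, hN, rfl⟩ := hfT
        refine ⟨N, hN, ?_⟩
        rw [hψapp, Matrix.toLin'_apply]
        exact (hkey N).symm
    · rintro (rfl | ⟨N, hN, rfl⟩)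
      · exact ⟨X, Or.inl rfl, rfl⟩
      · refine ⟨(A⁻¹ * N).mulVec X, Or.inr ⟨ψ N, Submodule.mem_map_of_mem hN, ?_⟩, hkey N⟩
        rw [hψapp, Matrix.toLin'_apply]
  have goal1 : Submodule.span F
      ({A.mulVec X} ∪ {Y : Fin n → F | ∃ N ∈ D, N.mulVec X = Y}) = ⊤ := by
    rw [← hset, Submodule.span_image, hcore, Submodule.map_top]
    exact LinearMap.range_eq_top.mpr hsurj
  refine ⟨goal1, ?_⟩
  -- goal 2
  rw [eq_top_iff, ← goal1]
  refine Submodule.span_le.mpr ?_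
  intro Y hY
  simp only [Set.mem_union, Set.mem_singleton_iff, Set.mem_setOf_eq] at hY
  rcases hY with rfl | ⟨N, hN, rfl⟩
  · exact Submodule.subset_span ⟨A, hA, rfl⟩
  · have hANS : A + N ∈ S := by
      have := AffineSubspace.vadd_mem_of_mem_direction hN hA
      simpa [add_comm] using this
    have hrw : N.mulVec X = (A + N).mulVec X - A.mulVec X := by
      rw [Matrix.add_mulVec]; abel
    rw [hrw]
    exact sub_mem (Submodule.subset_span ⟨A + N, hANS, rfl⟩)
      (Submodule.subset_span ⟨A, hA, rfl⟩)
end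

section
/- Let F be a field, n > r > 0 be integers, r = s + t with s, t ≥ 0, and let M and N be optimal affine subspaces of t×t and s×s matrices over F respectively. Set S := M ∧_{n,n} N, and let (e₁, …, e_n) be the standard basis of F^n, F₀ := span(e_{s+1}, …, e_n), G₀ := span(e_{t+1}, …, e_n). If F' and G' are linear subspaces of F^n such that XᵀMY = 0 for all X ∈ F', Y ∈ G' and M ∈ S, and dim F' + dim G' = 2n − r, then F' = F₀ and G' = G₀. -/
open Matrix

/-- Given sets M of t×t matrices and N of s×s matrices, and n ≥ p ≥ s + t,
the set M ∧_{n,p} N of n×p matrices with block structure (row sizes s, t, n-s-t;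
column sizes t, s, p-s-t) of the form [[?, N, ?], [M, 0, 0], [?, 0, 0]]. -/
def wedge {F : Type} [Field F] {n p s t : ℕ} (hn : s + t ≤ n) (hp : s + t ≤ p)
    (M : Set (Matrix (Fin t) (Fin t) F)) (N : Set (Matrix (Fin s) (Fin s) F)) :
    Set (Matrix (Fin n) (Fin p) F) :=
  {X | (∀ (i : Fin n) (j : Fin p), s ≤ (i : ℕ) → t ≤ (j : ℕ) → X i j = 0) ∧
    (Matrix.of fun (a b : Fin t) =>
      X ⟨s + ↑a, by have := a.isLt; omega⟩ ⟨↑b, by have := b.isLt; omega⟩) ∈ M ∧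
    (Matrix.of fun (a b : Fin s) =>
      X ⟨↑a, by have := a.isLt; omega⟩ ⟨t + ↑b, by have := b.isLt; omega⟩) ∈ N}

section AuxDefs

variable {F : Type} [Field F]

lemma sum_split19 {M : Type} [AddCommMonoid M] {a b m n : ℕ} (e : a + b + m = n)
    (f : Fin n → M) :
    ∑ j, f j = ((∑ i : Fin a, f ⟨i, by omega⟩) + ∑ i : Fin b, f ⟨a + ↑i, by omega⟩)
      + ∑ i : Fin m, f ⟨a + b + ↑i, by omega⟩ := by
  rw [← Fintype.sum_equiv (finCongr e) (fun i => f (finCongr e i)) f (fun i => rfl)]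
  rw [Fin.sum_univ_add, Fin.sum_univ_add]
  rfl

/-- The matrix [[0, N₀, c·e_kᵀ],[M₀,0,0],[e_k·dᵀ? ,0,0]] used in the proof. -/
def Amat (n s t : ℕ) (M₀ : Matrix (Fin t) (Fin t) F) (N₀ : Matrix (Fin s) (Fin s) F)
    (c : Fin s → F) (d : Fin t → F) : Matrix (Fin n) (Fin n) F :=
  Matrix.of fun i j =>
    if hit : (i : ℕ) < s then
      if hjt : (j : ℕ) < t then 0
      else if hjs : (j : ℕ) < t + s then N₀ ⟨i, hit⟩ ⟨(j : ℕ) - t, by omega⟩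
      else if (j : ℕ) = s + t then c ⟨i, hit⟩ else 0
    else if his : (i : ℕ) < s + t then
      if hjt : (j : ℕ) < t then M₀ ⟨(i : ℕ) - s, by omega⟩ ⟨j, hjt⟩ else 0
    else if hjt : (j : ℕ) < t then (if (i : ℕ) = s + t then d ⟨j, hjt⟩ else 0) else 0

variable {n s t : ℕ} {M₀ : Matrix (Fin t) (Fin t) F} {N₀ : Matrix (Fin s) (Fin s) F}

lemma Amat_transpose (c : Fin s → F) (d : Fin t → F) :
    (Amat n s t M₀ N₀ c d)ᵀ = Amat n t s N₀ᵀ M₀ᵀ d c := by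
  ext i j
  simp only [Amat, transpose_apply, of_apply]
  split_ifs <;> first | rfl | omega

lemma Amat_mulVec_lt (hn : s + t < n) (c : Fin s → F) (d : Fin t → F) (v : Fin n → F)
    (i : Fin n) (hi : (i : ℕ) < s) :
    (Amat n s t M₀ N₀ c d).mulVec v i
      = (∑ b : Fin s, N₀ ⟨i, hi⟩ b * v ⟨t + ↑b, by omega⟩) + c ⟨i, hi⟩ * v ⟨s + t, hn⟩ := by
  have e : t + s + (n - (s + t)) = n := by omega
  show ∑ j, Amat n s t M₀ N₀ c d i j * v j = _
  rw [sum_split19 e]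
  have h1 : (∑ b : Fin t, Amat n s t M₀ N₀ c d i ⟨b, by omega⟩ * v ⟨b, by omega⟩) = 0 := by
    refine Finset.sum_eq_zero fun b _ => ?_
    simp only [Amat, of_apply]
    rw [dif_pos hi, dif_pos b.isLt, zero_mul]
  have h2 : (∑ b : Fin s, Amat n s t M₀ N₀ c d i ⟨t + ↑b, by omega⟩ * v ⟨t + ↑b, by omega⟩)
      = ∑ b : Fin s, N₀ ⟨i, hi⟩ b * v ⟨t + ↑b, by omega⟩ := by
    refine Finset.sum_congr rfl fun b _ => ?_
    simp only [Amat, of_apply]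
    rw [dif_pos hi, dif_neg (by omega), dif_pos (by omega)]
    congr 2
    exact Fin.ext (by simp)
  have h3 : (∑ b : Fin (n - (s + t)),
        Amat n s t M₀ N₀ c d i ⟨t + s + ↑b, by omega⟩ * v ⟨t + s + ↑b, by omega⟩)
      = c ⟨i, hi⟩ * v ⟨s + t, hn⟩ := by
    rw [Finset.sum_eq_single (⟨0, by omega⟩ : Fin (n - (s + t)))]
    · simp only [Amat, of_apply]
      rw [dif_pos hi, dif_neg (by omega), dif_neg (by omega), if_pos (by omega)]
      exact congrArg (fun x => c ⟨↑i, hi⟩ * v x) (Fin.ext (by simp; omega))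
    · intro b _ hb
      have hb' : (b : ℕ) ≠ 0 := fun h => hb (Fin.ext h)
      simp only [Amat, of_apply]
      rw [dif_pos hi, dif_neg (by omega), dif_neg (by omega), if_neg (by omega), zero_mul]
    · intro h; exact absurd (Finset.mem_univ _) h
  rw [h1, h2, h3, zero_add]

lemma Amat_mulVec_mid (hn : s + t < n) (c : Fin s → F) (d : Fin t → F) (v : Fin n → F)
    (i : Fin n) (hi1 : s ≤ (i : ℕ)) (hi2 : (i : ℕ) < s + t) :
    (Amat n s t M₀ N₀ c d).mulVec v i
      = ∑ b : Fin t, M₀ ⟨(i : ℕ) - s, by omega⟩ b * v ⟨b, by omega⟩ := by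
  have e : t + s + (n - (s + t)) = n := by omega
  show ∑ j, Amat n s t M₀ N₀ c d i j * v j = _
  rw [sum_split19 e]
  have h1 : (∑ b : Fin t, Amat n s t M₀ N₀ c d i ⟨b, by omega⟩ * v ⟨b, by omega⟩)
      = ∑ b : Fin t, M₀ ⟨(i : ℕ) - s, by omega⟩ b * v ⟨b, by omega⟩ := by
    refine Finset.sum_congr rfl fun b _ => ?_
    simp only [Amat, of_apply]
    rw [dif_neg (by omega), dif_pos hi2, dif_pos b.isLt]
  have h2 : (∑ b : Fin s, Amat n s t M₀ N₀ c d i ⟨t + ↑b, by omega⟩ * v ⟨t + ↑b, by omega⟩)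
      = 0 := by
    refine Finset.sum_eq_zero fun b _ => ?_
    simp only [Amat, of_apply]
    rw [dif_neg (by omega), dif_pos hi2, dif_neg (by omega), zero_mul]
  have h3 : (∑ b : Fin (n - (s + t)),
      Amat n s t M₀ N₀ c d i ⟨t + s + ↑b, by omega⟩ * v ⟨t + s + ↑b, by omega⟩) = 0 := by
    refine Finset.sum_eq_zero fun b _ => ?_
    simp only [Amat, of_apply]
    rw [dif_neg (by omega), dif_pos hi2, dif_neg (by omega), zero_mul]
  rw [h1, h2, h3, add_zero, add_zero]

lemma Amat_mulVec_last (c : Fin s → F) (v : Fin n → F)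
    (i : Fin n) (hi : s + t ≤ (i : ℕ)) :
    (Amat n s t M₀ N₀ c 0).mulVec v i = 0 := by
  show ∑ j, Amat n s t M₀ N₀ c 0 i j * v j = 0
  refine Finset.sum_eq_zero fun j _ => ?_
  simp only [Amat, of_apply]
  rw [dif_neg (by omega), dif_neg (by omega)]
  split_ifs <;> simp

end AuxDefs

section Aux2

variable {F : Type} [Field F] {n s t : ℕ}
  {M₀ : Matrix (Fin t) (Fin t) F} {N₀ : Matrix (Fin s) (Fin s) F}

lemma eq_zero_of_isUnit_mulVec {m : ℕ} {P : Matrix (Fin m) (Fin m) F} (h : IsUnit P)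
    {v : Fin m → F} (hv : P.mulVec v = 0) : v = 0 := by
  have hd : IsUnit P.det := (Matrix.isUnit_iff_isUnit_det P).mp h
  calc v = ((P⁻¹ * P).mulVec v) := by rw [Matrix.nonsing_inv_mul P hd, Matrix.one_mulVec]
  _ = P⁻¹.mulVec (P.mulVec v) := by rw [Matrix.mulVec_mulVec]
  _ = 0 := by rw [hv, Matrix.mulVec_zero]

lemma Amat_mem_wedge {Ms : Set (Matrix (Fin t) (Fin t) F)} {Ns : Set (Matrix (Fin s) (Fin s) F)}
    (hn : s + t ≤ n) (hM₀ : M₀ ∈ Ms) (hN₀ : N₀ ∈ Ns) (c : Fin s → F) (d : Fin t → F) :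
    Amat n s t M₀ N₀ c d ∈ wedge hn hn Ms Ns := by
  refine ⟨fun i j hi hj => ?_, ?_, ?_⟩
  · simp only [Amat, of_apply]
    rw [dif_neg (by omega)]
    split_ifs <;> first | rfl | omega
  · have : (Matrix.of fun (a b : Fin t) =>
        Amat n s t M₀ N₀ c d ⟨s + ↑a, by have := a.isLt; omega⟩
          ⟨↑b, by have := b.isLt; omega⟩) = M₀ := by
      ext a b
      simp only [Amat, of_apply]
      rw [dif_neg (by omega), dif_pos (by omega), dif_pos b.isLt]
      congr 1
      exact Fin.ext (by simp)
    rw [this]; exact hM₀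
  · have : (Matrix.of fun (a b : Fin s) =>
        Amat n s t M₀ N₀ c d ⟨↑a, by have := a.isLt; omega⟩
          ⟨t + ↑b, by have := b.isLt; omega⟩) = N₀ := by
      ext a b
      simp only [Amat, of_apply]
      rw [dif_pos a.isLt, dif_neg (by omega), dif_pos (by omega)]
      congr 1 <;> exact Fin.ext (by simp)
    rw [this]; exact hN₀

end Aux2

section Aux3

open Module

variable {F : Type} [Field F] {n s t : ℕ}
  {M₀ : Matrix (Fin t) (Fin t) F} {N₀ : Matrix (Fin s) (Fin s) F}

/-- The dot-product bilinear form on `Fin n → F`. -/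
def dotB (F : Type) [Field F] (n : ℕ) : LinearMap.BilinForm F (Fin n → F) :=
  LinearMap.mk₂ F (fun x y => x ⬝ᵥ y)
    (fun x x' y => add_dotProduct x x' y) (fun a x y => smul_dotProduct a x y)
    (fun x y y' => dotProduct_add x y y') (fun a x y => dotProduct_smul a x y)

lemma dotB_apply (x y : Fin n → F) : dotB F n x y = x ⬝ᵥ y := rfl

lemma dotB_isRefl : (dotB F n).IsRefl := by
  intro x y h
  rw [dotB_apply, dotProduct_comm]
  exact h

lemma dotB_nondegenerate : (dotB F n).Nondegenerate := by
  refine ⟨fun x hx => ?_, fun x hx => ?_⟩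
  · funext i
    have := hx (Pi.single i 1)
    rwa [dotB_apply, dotProduct_single, mul_one] at this
  · funext i
    have := hx (Pi.single i 1)
    rwa [dotB_apply, dotProduct_comm, dotProduct_single, mul_one] at this

set_option maxHeartbeats 1000000 in
lemma ker_Amat_le (hn : s + t < n) (hM₀ : IsUnit M₀) (hN₀ : IsUnit N₀)
    {F' G' : Submodule F (Fin n → F)}
    (hdim : 2 * n ≤ finrank F F' + finrank F G' + (s + t)) (c : Fin s → F)
    (horth : ∀ X ∈ F', ∀ Y ∈ G', X ⬝ᵥ (Amat n s t M₀ N₀ c 0).mulVec Y = 0) :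
    LinearMap.ker (Amat n s t M₀ N₀ c 0).mulVecLin ≤ G' := by
  classical
  set A := Amat n s t M₀ N₀ c 0 with hA
  set K := LinearMap.ker A.mulVecLin with hK
  -- step 1 : finrank K ≤ n - (s + t)
  have hKle : finrank F K ≤ n - (s + t) := by
    set π : (Fin n → F) →ₗ[F] (Fin (n - (s + t)) → F) :=
      LinearMap.funLeft F F (fun b : Fin (n - (s + t)) => (⟨s + t + ↑b, by omega⟩ : Fin n))
      with hπ
    have hkey : ∀ v ∈ K, π v = 0 → v = 0 := by
      intro v hv hπv
      have hv' : A.mulVec v = 0 := by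
        rw [← Matrix.mulVecLin_apply]; exact hv
      have h3 : ∀ b : Fin (n - (s + t)), v ⟨s + t + ↑b, by omega⟩ = 0 := by
        intro b
        exact congrFun hπv b
      have hk0 : v ⟨s + t, hn⟩ = 0 := by
        have := h3 ⟨0, by omega⟩
        rw [show (⟨s + t, hn⟩ : Fin n) = ⟨s + t + ↑(⟨0, by omega⟩ : Fin (n - (s + t))), by omega⟩
          from Fin.ext (by simp)]
        exact this
      have hv1 : (fun b : Fin t => v ⟨↑b, by omega⟩) = 0 := by
        apply eq_zero_of_isUnit_mulVec hM₀
        funext a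
        have h := congrFun hv' ⟨s + ↑a, by omega⟩
        rw [Amat_mulVec_mid hn c 0 v _ (show s ≤ s + (a:ℕ) by omega) (show s + (a:ℕ) < s + t by omega)] at h
        show (fun j => M₀ a j) ⬝ᵥ _ = 0
        rw [show a = ⟨(((⟨s + ↑a, by omega⟩ : Fin n) : ℕ)) - s, by simp⟩ from Fin.ext (by simp)]
        exact h
      have hv2 : (fun b : Fin s => v ⟨t + ↑b, by omega⟩) = 0 := by
        apply eq_zero_of_isUnit_mulVec hN₀
        funext a
        have h := congrFun hv' ⟨↑a, by omega⟩
        rw [Amat_mulVec_lt hn c 0 v _ (show (a:ℕ) < s from a.isLt)] at h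
        rw [hk0, mul_zero, add_zero] at h
        show (fun j => N₀ a j) ⬝ᵥ _ = 0
        rw [show a = (⟨((⟨↑a, by omega⟩ : Fin n) : ℕ), by simp⟩ : Fin s) from Fin.ext (by simp)]
        exact h
      funext j
      rcases lt_or_ge (j : ℕ) t with hj | hj
      · have := congrFun hv1 ⟨j, hj⟩
        simpa using this
      rcases lt_or_ge (j : ℕ) (t + s) with hj2 | hj2
      · have := congrFun hv2 ⟨(j : ℕ) - t, by omega⟩
        rw [show j = ⟨t + ((j : ℕ) - t), by omega⟩ from Fin.ext (by simp; omega)]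
        simpa using this
      · have := h3 ⟨(j : ℕ) - (s + t), by omega⟩
        rw [show j = ⟨s + t + ((j : ℕ) - (s + t)), by omega⟩ from Fin.ext (by simp; omega)]
        simpa using this
    have hinj : Function.Injective (π.comp K.subtype) := by
      rw [← LinearMap.ker_eq_bot]
      rw [Submodule.eq_bot_iff]
      rintro ⟨v, hv⟩ hx
      exact Subtype.ext (hkey v hv hx)
    calc finrank F K ≤ finrank F (Fin (n - (s + t)) → F) :=
          LinearMap.finrank_le_finrank_of_injective hinj
    _ = n - (s + t) := Module.finrank_fin_fun F
  -- step 2 : K ⊓ G' has big rank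
  have hW : finrank F ((dotB F n).orthogonal F') = n - finrank F F' := by
    rw [LinearMap.BilinForm.finrank_orthogonal dotB_nondegenerate F',
      Module.finrank_fin_fun]
  set φ := A.mulVecLin.domRestrict G' with hφ
  have hrange : LinearMap.range φ ≤ (dotB F n).orthogonal F' := by
    rintro x ⟨y, rfl⟩
    rw [LinearMap.BilinForm.mem_orthogonal_iff]
    intro z hz
    show dotB F n z (φ y) = 0
    rw [dotB_apply, hφ]
    simp only [LinearMap.domRestrict_apply, Matrix.mulVecLin_apply]
    exact horth z hz y y.2
  have h1 : finrank F (LinearMap.range φ) ≤ n - finrank F F' :=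
    hW ▸ Submodule.finrank_mono hrange
  have h2 : finrank F (LinearMap.range φ) + finrank F (LinearMap.ker φ) = finrank F G' :=
    LinearMap.finrank_range_add_finrank_ker φ
  have h3 : finrank F (G' ⊓ K : Submodule F (Fin n → F)) = finrank F (LinearMap.ker φ) := by
    rw [hφ, LinearMap.ker_domRestrict, ← Submodule.map_comap_subtype,
      Submodule.finrank_map_subtype_eq]
  have hfF' : finrank F F' ≤ n := by
    have := Submodule.finrank_le F'
    rwa [Module.finrank_fin_fun] at this
  have hineq : finrank F K ≤ finrank F (G' ⊓ K : Submodule F (Fin n → F)) := by omega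
  have heq : G' ⊓ K = K :=
    Submodule.eq_of_le_of_finrank_le inf_le_right hineq
  rw [← heq]
  exact inf_le_left

end Aux3

section Aux4

open Module

variable {F : Type} [Field F] {n s t : ℕ}
  {M₀ : Matrix (Fin t) (Fin t) F} {N₀ : Matrix (Fin s) (Fin s) F}

lemma aux19 (hn : s + t < n) (hM₀ : IsUnit M₀) (hN₀ : IsUnit N₀)
    {F' G' : Submodule F (Fin n → F)}
    (horth : ∀ c : Fin s → F, ∀ X ∈ F', ∀ Y ∈ G',
      X ⬝ᵥ (Amat n s t M₀ N₀ c 0).mulVec Y = 0)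
    (hdim : 2 * n ≤ finrank F F' + finrank F G' + (s + t)) :
    ∀ Y : Fin n → F, (∀ j : Fin n, (j : ℕ) < t → Y j = 0) → Y ∈ G' := by
  intro Y hY
  classical
  set c : Fin s → F := fun a => -(∑ b : Fin s, N₀ a b * Y ⟨t + ↑b, by omega⟩) with hc
  set w : Fin n → F := fun j =>
    if (j : ℕ) < t then 0 else if (j : ℕ) < t + s then Y j else
      if (j : ℕ) = s + t then 1 else 0 with hw
  have hwlt : ∀ (j : Fin n), (j : ℕ) < t → w j = 0 := by
    intro j hj; simp only [hw]; rw [if_pos hj]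
  have hwmid : ∀ (j : Fin n) (h1 : t ≤ (j : ℕ)) (h2 : (j : ℕ) < t + s), w j = Y j := by
    intro j h1 h2; simp only [hw]; rw [if_neg (by omega), if_pos h2]
  have hwk : ∀ j : Fin n, (j : ℕ) = s + t → w j = 1 := by
    intro j hj; simp only [hw]; rw [if_neg (by omega), if_neg (by omega), if_pos (by omega)]
  -- w is in the kernel of Amat c
  have hwker : (Amat n s t M₀ N₀ c 0).mulVec w = 0 := by
    funext i
    rcases lt_or_ge (i : ℕ) s with hi | hi
    · rw [Amat_mulVec_lt hn c 0 w i hi, hwk ⟨s + t, hn⟩ rfl, mul_one]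
      have : (∑ b : Fin s, N₀ ⟨i, hi⟩ b * w ⟨t + ↑b, by omega⟩)
          = ∑ b : Fin s, N₀ ⟨i, hi⟩ b * Y ⟨t + ↑b, by omega⟩ := by
        refine Finset.sum_congr rfl fun b _ => ?_
        rw [hwmid _ (show t ≤ t + (b:ℕ) by omega) (show t + (b:ℕ) < t + s by have := b.isLt; omega)]
      rw [this, hc]
      exact add_neg_cancel _
    rcases lt_or_ge (i : ℕ) (s + t) with hi2 | hi2
    · rw [Amat_mulVec_mid hn c 0 w i hi hi2]
      refine Finset.sum_eq_zero fun b _ => ?_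
      rw [hwlt _ b.isLt, mul_zero]
    · exact Amat_mulVec_last c w i hi2
  -- u = Y - w is in the kernel of Amat 0
  have huker : (Amat n s t M₀ N₀ 0 0).mulVec (Y - w) = 0 := by
    have hu0 : ∀ (j : Fin n), (j : ℕ) < t + s → (Y - w) j = 0 := by
      intro j hj
      rcases lt_or_ge (j : ℕ) t with h | h
      · simp [hY j h, hwlt j h]
      · simp [hwmid j h hj]
    funext i
    rcases lt_or_ge (i : ℕ) s with hi | hi
    · rw [Amat_mulVec_lt hn 0 0 (Y - w) i hi]
      rw [Finset.sum_eq_zero fun b _ => by rw [hu0 _ (show t + (b:ℕ) < t + s by have := b.isLt; omega), mul_zero]]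
      simp
    rcases lt_or_ge (i : ℕ) (s + t) with hi2 | hi2
    · rw [Amat_mulVec_mid hn 0 0 (Y - w) i hi hi2]
      refine Finset.sum_eq_zero fun b _ => ?_
      rw [hu0 _ (show (b:ℕ) < t + s by have := b.isLt; omega), mul_zero]
    · exact Amat_mulVec_last 0 (Y - w) i hi2
  have hwG : w ∈ G' :=
    ker_Amat_le hn hM₀ hN₀ hdim c (horth c) (by
      rw [LinearMap.mem_ker, Matrix.mulVecLin_apply]; exact hwker)
  have huG : Y - w ∈ G' :=
    ker_Amat_le hn hM₀ hN₀ hdim 0 (horth 0) (by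
      rw [LinearMap.mem_ker, Matrix.mulVecLin_apply]; exact huker)
  have : Y = w + (Y - w) := by ring
  rw [this]
  exact G'.add_mem hwG huG

end Aux4

section Aux5

open Module

variable {F : Type} [Field F]

lemma coordZ (F : Type) [Field F] (n k : ℕ) (hk : k ≤ n) :
    ∃ Z : Submodule F (Fin n → F),
      (∀ X : Fin n → F, X ∈ Z ↔ ∀ i : Fin n, (i : ℕ) < k → X i = 0) ∧
      finrank F Z = n - k := by
  set π : (Fin n → F) →ₗ[F] (Fin k → F) :=
    LinearMap.funLeft F F (fun i : Fin k => (⟨i, by omega⟩ : Fin n)) with hπ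
  refine ⟨LinearMap.ker π, fun X => ?_, ?_⟩
  · rw [LinearMap.mem_ker]
    constructor
    · intro h i hi
      exact congrFun h ⟨i, hi⟩
    · intro h
      funext i
      exact h _ i.isLt
  · have hπsurj : Function.Surjective π :=
      LinearMap.funLeft_surjective_of_injective F F _
        (fun a b h => Fin.ext (by simpa using congrArg Fin.val h))
    have h1 := LinearMap.finrank_range_add_finrank_ker π
    rw [LinearMap.range_eq_top.mpr hπsurj, finrank_top, Module.finrank_fin_fun,
      Module.finrank_fin_fun] at h1
    omega

end Aux5


/-- Let n > r > 0, r = s + t, and let M, N be optimal affine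
subspaces of t×t and s×s matrices over a field F. Set S := M ∧_{n,n} N, and
F₀ := span(e_{s+1}, …, e_n) (vectors vanishing on the first s coordinates),
G₀ := span(e_{t+1}, …, e_n) (vectors vanishing on the first t coordinates).
If F' and G' are linear subspaces of F^n with XᵀAY = 0 for all X ∈ F', Y ∈ G',
A ∈ S, and dim F' + dim G' = 2n − r, then F' = F₀ and G' = G₀. -/
theorem stmt_19 (F : Type) [Field F] (n r s t : ℕ) (hr : 0 < r) (hrn : r < n)
    (hst : s + t = r)
    (M : AffineSubspace F (Matrix (Fin t) (Fin t) F)) (hM : IsOptimal M)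
    (N : AffineSubspace F (Matrix (Fin s) (Fin s) F)) (hN : IsOptimal N)
    (F' G' : Submodule F (Fin n → F))
    (horth : ∀ X ∈ F', ∀ Y ∈ G',
      ∀ A ∈ wedge (F := F) (n := n) (p := n)
        (show s + t ≤ n by omega) (show s + t ≤ n by omega)
        (M : Set (Matrix (Fin t) (Fin t) F)) (N : Set (Matrix (Fin s) (Fin s) F)),
      X ⬝ᵥ A.mulVec Y = 0)
    (hdim : Module.finrank F F' + Module.finrank F G' = 2 * n - r) :
    (F' : Set (Fin n → F)) = {X : Fin n → F | ∀ i : Fin n, (i : ℕ) < s → X i = 0} ∧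
    (G' : Set (Fin n → F)) = {Y : Fin n → F | ∀ i : Fin n, (i : ℕ) < t → Y i = 0} := by
  subst hst
  obtain ⟨⟨M₀, hM₀m⟩, hMinv, -⟩ := hM
  obtain ⟨⟨N₀, hN₀m⟩, hNinv, -⟩ := hN
  have hM₀ : IsUnit M₀ := hMinv M₀ hM₀m
  have hN₀ : IsUnit N₀ := hNinv N₀ hN₀m
  have horthA : ∀ (c : Fin s → F) (d : Fin t → F), ∀ X ∈ F', ∀ Y ∈ G',
      X ⬝ᵥ (Amat n s t M₀ N₀ c d).mulVec Y = 0 := fun c d X hX Y hY =>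
    horth X hX Y hY _ (Amat_mem_wedge (by omega) hM₀m hN₀m c d)
  have hdim2 : 2 * n ≤ Module.finrank F F' + Module.finrank F G' + (s + t) := by omega
  have hG : ∀ Y : Fin n → F, (∀ j : Fin n, (j : ℕ) < t → Y j = 0) → Y ∈ G' :=
    aux19 hrn hM₀ hN₀ (fun c X hX Y hY => horthA c 0 X hX Y hY) hdim2
  have hN₀T : IsUnit N₀ᵀ := (Matrix.isUnit_iff_isUnit_det N₀ᵀ).mpr
    (by rw [Matrix.det_transpose]; exact (Matrix.isUnit_iff_isUnit_det N₀).mp hN₀)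
  have hM₀T : IsUnit M₀ᵀ := (Matrix.isUnit_iff_isUnit_det M₀ᵀ).mpr
    (by rw [Matrix.det_transpose]; exact (Matrix.isUnit_iff_isUnit_det M₀).mp hM₀)
  have hF : ∀ Y : Fin n → F, (∀ j : Fin n, (j : ℕ) < s → Y j = 0) → Y ∈ F' := by
    refine aux19 (show t + s < n by omega) hN₀T hM₀T (F' := G') (G' := F') ?_ (by omega)
    intro c X hX Y hY
    rw [show Amat n t s N₀ᵀ M₀ᵀ c 0 = (Amat n s t M₀ N₀ 0 c)ᵀ from (Amat_transpose 0 c).symm]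
    rw [Matrix.mulVec_transpose, dotProduct_comm, ← Matrix.dotProduct_mulVec]
    exact horthA 0 c Y hY X hX
  obtain ⟨Zs, hZsmem, hZsrank⟩ := coordZ F n s (by omega)
  obtain ⟨Zt, hZtmem, hZtrank⟩ := coordZ F n t (by omega)
  have hZsle : Zs ≤ F' := fun X hX => hF X ((hZsmem X).mp hX)
  have hZtle : Zt ≤ G' := fun X hX => hG X ((hZtmem X).mp hX)
  have h1 : n - s ≤ Module.finrank F F' := hZsrank ▸ Submodule.finrank_mono hZsle
  have h2 : n - t ≤ Module.finrank F G' := hZtrank ▸ Submodule.finrank_mono hZtle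
  have hFn : Module.finrank F F' ≤ n := by
    have := Submodule.finrank_le F'
    rwa [Module.finrank_fin_fun] at this
  have hGn : Module.finrank F G' ≤ n := by
    have := Submodule.finrank_le G'
    rwa [Module.finrank_fin_fun] at this
  have heqs : Zs = F' :=
    Submodule.eq_of_le_of_finrank_le hZsle (by rw [hZsrank]; omega)
  have heqt : Zt = G' :=
    Submodule.eq_of_le_of_finrank_le hZtle (by rw [hZtrank]; omega)
  constructor
  · rw [← heqs]
    ext X
    simpa using hZsmem X
  · rw [← heqt]
    ext X
    simpa using hZtmem X
end
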